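/- Let ℓ, Q, k, N ∈ ℕ with N = Q^{k+1}, Q even and 4ℓ < Q. Then the trigonometric polynomial p(x) = Σ_{|m| ≤ ℓQ^k} (1 - cos(2π(ℓQ^k - |m|)/N)) e^{2πimx} is non-negative on the torus T. -/
import Mathlib

open Finset

/- auxiliary: character function -/
noncomputable def auxE (x : ℝ) (m : ℤ) : ℂ :=
  Complex.exp (2 * (Real.pi : ℂ) * Complex.I * (m : ℂ) * (x : ℂ))

lemma auxE_eq (x : ℝ) (m : ℤ) :
    auxE x m = Complex.exp (((2 * Real.pi * m * x : ℝ) : ℂ) * Complex.I) := by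
  rw [auxE]; congr 1; push_cast; ring

lemma auxE_add (x : ℝ) (a b : ℤ) : auxE x (a + b) = auxE x a * auxE x b := by
  rw [auxE_eq, auxE_eq, auxE_eq, ← Complex.exp_add]
  congr 1; push_cast; ring

lemma auxE_zero (x : ℝ) : auxE x 0 = 1 := by simp [auxE]

lemma auxE_conj (x : ℝ) (m : ℤ) : (starRingEnd ℂ) (auxE x m) = auxE x (-m) := by
  rw [auxE_eq, auxE_eq, ← Complex.exp_conj]
  congr 1
  rw [map_mul, Complex.conj_I, Complex.conj_ofReal]
  push_cast; ring

/- auxiliary: truncated geometric character sum -/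
noncomputable def auxT (x : ℝ) (n : ℤ) : ℂ := ∑ i ∈ Icc (0:ℤ) n, auxE x i

lemma aux_Icc_insert_top (a b : ℤ) (h : a ≤ b + 1) :
    Icc a (b+1) = insert (b+1) (Icc a b) := by
  ext m; simp only [Finset.mem_Icc, Finset.mem_insert]; omega

lemma auxT_succ (x : ℝ) (n : ℤ) (h : 0 ≤ n) : auxT x (n+1) = auxT x n + auxE x (n+1) := by
  rw [auxT, auxT, aux_Icc_insert_top 0 n (by omega), Finset.sum_insert (by simp)]
  ring

lemma aux_sum_shift (f : ℤ → ℂ) (a b c : ℤ) :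
    ∑ i ∈ Icc a b, f (i + c) = ∑ i ∈ Icc (a+c) (b+c), f i := by
  rw [← Finset.map_add_right_Icc, Finset.sum_map]
  rfl

lemma aux_sum_neg (f : ℤ → ℂ) (a b : ℤ) :
    ∑ i ∈ Icc a b, f (-i) = ∑ i ∈ Icc (-b) (-a), f i := by
  refine Finset.sum_nbij' (fun m => -m) (fun m => -m) ?_ ?_ ?_ ?_ ?_
  · intro m hm; simp only [Finset.mem_Icc] at *; omega
  · intro m hm; simp only [Finset.mem_Icc] at *; omega
  · intro m _; ring
  · intro m _; ring
  · intro m _; rfl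

lemma auxT_conj (x : ℝ) (n : ℤ) :
    (starRingEnd ℂ) (auxT x n) = ∑ i ∈ Icc (-n) 0, auxE x i := by
  rw [auxT, map_sum]
  simp only [auxE_conj]
  rw [aux_sum_neg (auxE x) 0 n, neg_zero]

/-- Fejér kernel identity. -/
lemma aux_fejer (x : ℝ) (n : ℕ) :
    ∑ m ∈ Icc (-(n:ℤ)) n, (((n:ℤ) + 1 - |m| : ℤ) : ℂ) * auxE x m
      = auxT x n * (starRingEnd ℂ) (auxT x n) := by
  induction n with
  | zero => simp [auxT, auxE_zero]
  | succ n ih =>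
    have hcast : ((n+1 : ℕ) : ℤ) = (n:ℤ)+1 := by push_cast; ring
    rw [hcast]
    have h1 : auxT x ((n:ℤ)+1) = auxT x n + auxE x ((n:ℤ)+1) := auxT_succ x n (by positivity)
    have expand : (auxT x (n:ℤ) + auxE x ((n:ℤ)+1)) *
          ((starRingEnd ℂ) (auxT x (n:ℤ)) + auxE x (-((n:ℤ)+1)))
        = auxT x (n:ℤ) * (starRingEnd ℂ) (auxT x (n:ℤ))
          + (auxE x ((n:ℤ)+1) * (starRingEnd ℂ) (auxT x (n:ℤ))
            + auxT x (n:ℤ) * auxE x (-((n:ℤ)+1))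
            + auxE x ((n:ℤ)+1) * auxE x (-((n:ℤ)+1))) := by ring
    have hA : auxE x ((n:ℤ)+1) * (starRingEnd ℂ) (auxT x (n:ℤ))
        = ∑ i ∈ Icc (1:ℤ) ((n:ℤ)+1), auxE x i := by
      rw [auxT_conj, Finset.mul_sum]
      rw [show (∑ i ∈ Icc (-(n:ℤ)) 0, auxE x ((n:ℤ)+1) * auxE x i)
            = ∑ i ∈ Icc (-(n:ℤ)) 0, auxE x (i + ((n:ℤ)+1)) from by
        refine Finset.sum_congr rfl fun i _ => ?_
        rw [auxE_add x i ((n:ℤ)+1)]; ring]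
      rw [aux_sum_shift (auxE x) (-(n:ℤ)) 0 ((n:ℤ)+1)]
      norm_num
    have hB : auxT x (n:ℤ) * auxE x (-((n:ℤ)+1))
        = ∑ i ∈ Icc (-((n:ℤ)+1)) (-1), auxE x i := by
      rw [auxT, Finset.sum_mul]
      rw [show (∑ i ∈ Icc (0:ℤ) (n:ℤ), auxE x i * auxE x (-((n:ℤ)+1)))
            = ∑ i ∈ Icc (0:ℤ) (n:ℤ), auxE x (i + (-((n:ℤ)+1))) from by
        refine Finset.sum_congr rfl fun i _ => ?_
        rw [auxE_add x i (-((n:ℤ)+1))]]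
      rw [aux_sum_shift (auxE x) 0 (n:ℤ) (-((n:ℤ)+1))]
      norm_num
    have hC : auxE x ((n:ℤ)+1) * auxE x (-((n:ℤ)+1)) = auxE x 0 := by
      rw [← auxE_add]; congr 1; ring
    have dirichlet : (∑ i ∈ Icc (1:ℤ) ((n:ℤ)+1), auxE x i)
        + (∑ i ∈ Icc (-((n:ℤ)+1)) (-1), auxE x i)
        + auxE x 0 = ∑ m ∈ Icc (-((n:ℤ)+1)) ((n:ℤ)+1), auxE x m := by
      have h2 : Icc (-((n:ℤ)+1)) ((n:ℤ)+1)
          = (Icc (-((n:ℤ)+1)) (-1) ∪ Icc (1:ℤ) ((n:ℤ)+1)) ∪ {0} := by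
        ext m; simp only [Finset.mem_Icc, Finset.mem_union, Finset.mem_singleton]; omega
      rw [h2, Finset.sum_union, Finset.sum_union]
      · simp; ring
      · rw [Finset.disjoint_left]; intro a ha hb; simp only [Finset.mem_Icc] at *; omega
      · rw [Finset.disjoint_left]; intro a ha hb
        simp only [Finset.mem_Icc, Finset.mem_union, Finset.mem_singleton] at *; omega
    have lhs_split : ∑ m ∈ Icc (-((n:ℤ)+1)) ((n:ℤ)+1), ((((n:ℤ)+1) + 1 - |m| : ℤ) : ℂ) * auxE x m
        = (∑ m ∈ Icc (-((n:ℤ)+1)) ((n:ℤ)+1), (((n:ℤ) + 1 - |m| : ℤ) : ℂ) * auxE x m)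
          + ∑ m ∈ Icc (-((n:ℤ)+1)) ((n:ℤ)+1), auxE x m := by
      rw [← Finset.sum_add_distrib]
      refine Finset.sum_congr rfl fun m _ => ?_
      push_cast; ring
    have shrink : ∑ m ∈ Icc (-((n:ℤ)+1)) ((n:ℤ)+1), (((n:ℤ) + 1 - |m| : ℤ) : ℂ) * auxE x m
        = ∑ m ∈ Icc (-(n:ℤ)) (n:ℤ), (((n:ℤ) + 1 - |m| : ℤ) : ℂ) * auxE x m := by
      symm
      refine Finset.sum_subset ?_ ?_
      · intro m hm; simp only [Finset.mem_Icc] at *; omega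
      · intro m hm hm'
        simp only [Finset.mem_Icc] at hm hm'
        have : |m| = (n:ℤ) + 1 := by rw [abs_eq (by positivity)]; omega
        rw [this]; simp
    rw [h1, map_add, auxE_conj, expand, ← ih, hA, hB, hC, lhs_split, shrink, ← dirichlet]

/-- Second-difference (convexity) decomposition of an eventually-zero sequence. -/
lemma aux_tele : ∀ (L : ℕ) (F : ℕ → ℝ), (∀ m, L ≤ m → F m = 0) → ∀ a : ℕ,
    F a = ∑ j ∈ range L, (F j - 2*F (j+1) + F (j+2)) * max ((j:ℝ) + 1 - a) 0 := by
  intro L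
  induction L with
  | zero => intro F hF a; simp [hF a (Nat.zero_le a)]
  | succ L ih =>
    intro F hF a
    set G : ℕ → ℝ := fun m => F m - F L * max ((L:ℝ) + 1 - m) 0 with hG
    have hGvan : ∀ m, L ≤ m → G m = 0 := by
      intro m hm
      rcases eq_or_lt_of_le hm with h | h
      · simp [hG, ← h]
      · have h1 : F m = 0 := hF m (by omega)
        have h2 : max ((L:ℝ) + 1 - m) 0 = 0 := by
          apply max_eq_right
          have : (L:ℝ) + 1 ≤ m := by
            have : (L + 1 : ℕ) ≤ m := h
            exact_mod_cast Nat.cast_le.mpr this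
          linarith
        simp [hG, h1, h2]
    have key := ih G hGvan a
    have hsame : ∀ j ∈ range L, (G j - 2*G (j+1) + G (j+2)) * max ((j:ℝ) + 1 - a) 0
        = (F j - 2*F (j+1) + F (j+2)) * max ((j:ℝ) + 1 - a) 0 := by
      intro j hj
      rw [Finset.mem_range] at hj
      have e0 : max ((L:ℝ) + 1 - j) 0 = (L:ℝ) + 1 - j := by
        apply max_eq_left
        have : (j:ℝ) ≤ L := by exact_mod_cast Nat.le_of_lt hj
        linarith
      have e1 : max ((L:ℝ) + 1 - (j+1:ℕ)) 0 = (L:ℝ) + 1 - (j+1:ℕ) := by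
        apply max_eq_left
        have : ((j:ℝ)+1) ≤ L + 1 := by
          have : (j:ℝ) ≤ L := by exact_mod_cast Nat.le_of_lt hj
          linarith
        push_cast
        linarith
      have e2 : max ((L:ℝ) + 1 - (j+2:ℕ)) 0 = (L:ℝ) + 1 - (j+2:ℕ) := by
        apply max_eq_left
        have : ((j:ℝ)+1) ≤ L := by
          have : (j+1 : ℕ) ≤ L := hj
          exact_mod_cast Nat.cast_le.mpr this
        push_cast
        linarith
      simp only [hG]
      rw [e0, e1, e2]
      push_cast
      ring
    rw [Finset.sum_congr rfl hsame] at key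
    rw [Finset.sum_range_succ, ← key]
    have cL : F L - 2*F (L+1) + F (L+2) = F L := by
      rw [hF (L+1) (by omega), hF (L+2) (by omega)]; ring
    rw [cL]
    simp only [hG]
    ring

/-- Nonnegativity of the second differences of the coefficient function. -/
lemma aux_cj_nonneg (L N : ℕ) (hN : 0 < N) (h4 : 4 * L < N)
    (F : ℕ → ℝ) (hFdef : ∀ a, a ≤ L → F a = 1 - Real.cos (2 * Real.pi * ((L:ℝ) - a) / N))
    (hF0 : ∀ m, L ≤ m → F m = 0) (j : ℕ) (hj : j < L) :
    0 ≤ F j - 2*F (j+1) + F (j+2) := by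
  have hNR : (0:ℝ) < N := by exact_mod_cast hN
  rcases Nat.lt_or_ge (j+2) (L+1) with h | h
  · have h2 : j + 2 ≤ L := by omega
    have e0 := hFdef j (by omega)
    have e1 := hFdef (j+1) (by omega)
    have e2 := hFdef (j+2) h2
    set t : ℝ := 2 * Real.pi * ((L:ℝ) - (j+1:ℕ)) / N with ht
    set h' : ℝ := 2 * Real.pi / N with hh'
    have a0 : 2 * Real.pi * ((L:ℝ) - j) / N = t + h' := by
      rw [ht, hh']; push_cast; field_simp; ring
    have a2 : 2 * Real.pi * ((L:ℝ) - (j+2:ℕ)) / N = t - h' := by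
      rw [ht, hh']; push_cast; field_simp; ring
    rw [e0, e1, e2, a0, a2, Real.cos_add, Real.cos_sub]
    have hcos_t : 0 ≤ Real.cos t := by
      apply Real.cos_nonneg_of_mem_Icc
      constructor
      · have hnum : 0 ≤ (L:ℝ) - (j+1:ℕ) := by
          have : (j+1:ℕ) ≤ L := by omega
          have := Nat.cast_le (α := ℝ).mpr this
          push_cast at this ⊢
          linarith
        have : 0 ≤ t := by
          rw [ht]; positivity
        linarith [Real.pi_pos]
      · have hnum : (L:ℝ) - (j+1:ℕ) ≤ L := by
          have : (0:ℝ) ≤ ((j+1:ℕ):ℝ) := Nat.cast_nonneg _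
          linarith
        have h4R : 4 * (L:ℝ) < N := by exact_mod_cast h4
        rw [ht]
        rw [div_le_iff₀ hNR]
        nlinarith [Real.pi_pos]
    nlinarith [Real.cos_le_one h', Real.cos_le_one t, Real.neg_one_le_cos h', Real.neg_one_le_cos t]
  · have e0 := hFdef j (by omega)
    have e1 : F (j+1) = 0 := hF0 (j+1) (by omega)
    have e2 : F (j+2) = 0 := hF0 (j+2) (by omega)
    rw [e0, e1, e2]
    have : Real.cos (2 * Real.pi * ((L:ℝ) - j) / N) ≤ 1 := Real.cos_le_one _
    linarith

/-- For `N = Q^{k+1}`, `Q` even with `4ℓ < Q`, the trigonometric polynomial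
`p(x) = ∑_{|m| ≤ ℓQ^k} (1 - cos(2π(ℓQ^k - |m|)/N)) e^{2πimx}` is real-valued and
non-negative on the torus. -/
theorem cosine_trig_poly_nonneg (ℓ Q k N : ℕ) (hℓ : 0 < ℓ) (hQ : Even Q)
    (hQℓ : 4 * ℓ < Q) (hN : N = Q ^ (k + 1)) (x : ℝ) :
    (∑ m ∈ Finset.Icc (-(ℓ * Q ^ k : ℤ)) (ℓ * Q ^ k : ℤ),
        ((1 - Real.cos (2 * Real.pi * ((ℓ * Q ^ k : ℝ) - |(m : ℝ)|) / N) : ℝ) : ℂ) *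
          Complex.exp (2 * (Real.pi : ℂ) * Complex.I * (m : ℂ) * (x : ℂ))).im = 0 ∧
    0 ≤ (∑ m ∈ Finset.Icc (-(ℓ * Q ^ k : ℤ)) (ℓ * Q ^ k : ℤ),
        ((1 - Real.cos (2 * Real.pi * ((ℓ * Q ^ k : ℝ) - |(m : ℝ)|) / N) : ℝ) : ℂ) *
          Complex.exp (2 * (Real.pi : ℂ) * Complex.I * (m : ℂ) * (x : ℂ))).re := by
  set L : ℕ := ℓ * Q ^ k with hLdef
  have hQpos : 0 < Q := by omega
  have hN0 : 0 < N := by rw [hN]; positivity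
  have h4 : 4 * L < N := by
    rw [hLdef, hN, pow_succ]
    calc 4 * (ℓ * Q ^ k) = (4 * ℓ) * Q ^ k := by ring
    _ < Q * Q ^ k := by
        apply Nat.mul_lt_mul_right (by positivity) |>.mpr hQℓ
    _ = Q ^ k * Q := by ring
  set F : ℕ → ℝ := fun a =>
    if a ≤ L then 1 - Real.cos (2 * Real.pi * ((L:ℝ) - a) / N) else 0 with hF
  have hFdef : ∀ a, a ≤ L → F a = 1 - Real.cos (2 * Real.pi * ((L:ℝ) - a) / N) := by
    intro a ha; simp [hF, ha]
  have hF0 : ∀ m, L ≤ m → F m = 0 := by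
    intro m hm
    rcases eq_or_lt_of_le hm with h | h
    · rw [hFdef m (by omega), ← h]
      simp
    · simp [hF, Nat.not_le_of_lt h]
  set c : ℕ → ℝ := fun j => F j - 2*F (j+1) + F (j+2) with hc
  have hcnn : ∀ j ∈ range L, 0 ≤ c j := fun j hj =>
    aux_cj_nonneg L N hN0 h4 F hFdef hF0 j (Finset.mem_range.mp hj)
  -- the key evaluation
  have key : (∑ m ∈ Finset.Icc (-(ℓ * Q ^ k : ℤ)) (ℓ * Q ^ k : ℤ),
        ((1 - Real.cos (2 * Real.pi * ((ℓ * Q ^ k : ℝ) - |(m : ℝ)|) / N) : ℝ) : ℂ) *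
          Complex.exp (2 * (Real.pi : ℂ) * Complex.I * (m : ℂ) * (x : ℂ)))
      = ((∑ j ∈ range L, c j * Complex.normSq (auxT x j) : ℝ) : ℂ) := by
    have hsetp : (-(ℓ * Q ^ k : ℤ)) = (-(L:ℤ)) := by push_cast [hLdef]; ring
    have hsetq : ((ℓ:ℤ) * (Q:ℤ) ^ k) = ((L:ℤ)) := by push_cast [hLdef]; ring
    calc
      (∑ m ∈ Finset.Icc (-(ℓ * Q ^ k : ℤ)) (ℓ * Q ^ k : ℤ),
          ((1 - Real.cos (2 * Real.pi * ((ℓ * Q ^ k : ℝ) - |(m : ℝ)|) / N) : ℝ) : ℂ) *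
            Complex.exp (2 * (Real.pi : ℂ) * Complex.I * (m : ℂ) * (x : ℂ)))
        = ∑ m ∈ Finset.Icc (-(L:ℤ)) (L:ℤ), ((F m.natAbs : ℝ) : ℂ) * auxE x m := by
          rw [hsetp, hsetq]
          refine Finset.sum_congr rfl fun m hm => ?_
          simp only [Finset.mem_Icc] at hm
          have hma : m.natAbs ≤ L := by omega
          have harg : 2 * Real.pi * ((ℓ * Q ^ k : ℝ) - |(m : ℝ)|) / N
              = 2 * Real.pi * ((L:ℝ) - (m.natAbs:ℝ)) / N := by
            rw [hLdef]; push_cast [Nat.cast_natAbs]; ring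
          rw [harg, ← hFdef m.natAbs hma]
          rfl
      _ = ∑ m ∈ Finset.Icc (-(L:ℤ)) (L:ℤ),
            ∑ j ∈ range L, ((c j * max ((j:ℝ) + 1 - (m.natAbs:ℝ)) 0 : ℝ) : ℂ) * auxE x m := by
          refine Finset.sum_congr rfl fun m hm => ?_
          rw [aux_tele L F hF0 m.natAbs]
          rw [Complex.ofReal_sum, Finset.sum_mul]
      _ = ∑ j ∈ range L, ∑ m ∈ Finset.Icc (-(L:ℤ)) (L:ℤ),
            ((c j * max ((j:ℝ) + 1 - (m.natAbs:ℝ)) 0 : ℝ) : ℂ) * auxE x m :=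
          Finset.sum_comm
      _ = ∑ j ∈ range L, ((c j : ℝ) : ℂ) * (auxT x j * (starRingEnd ℂ) (auxT x j)) := by
          refine Finset.sum_congr rfl fun j hj => ?_
          rw [Finset.mem_range] at hj
          rw [← aux_fejer x j, Finset.mul_sum]
          rw [show (∑ m ∈ Icc (-(j:ℤ)) (j:ℤ), ((c j:ℝ):ℂ) * ((((j:ℤ) + 1 - |m| : ℤ) : ℂ) * auxE x m))
              = ∑ m ∈ Icc (-(j:ℤ)) (j:ℤ),
                  ((c j * max ((j:ℝ) + 1 - (m.natAbs:ℝ)) 0 : ℝ) : ℂ) * auxE x m from by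
            refine Finset.sum_congr rfl fun m hm => ?_
            simp only [Finset.mem_Icc] at hm
            have hma : m.natAbs ≤ j := by omega
            have hmax : max ((j:ℝ) + 1 - (m.natAbs:ℝ)) 0 = (((j:ℤ) + 1 - |m| : ℤ) : ℝ) := by
              rw [max_eq_left]
              · push_cast [Nat.cast_natAbs]
                ring
              · have : (m.natAbs:ℝ) ≤ (j:ℝ) := by exact_mod_cast hma
                linarith
            rw [Complex.ofReal_mul, hmax, Complex.ofReal_intCast]
            ring]
          symm
          refine Finset.sum_subset ?_ ?_
          · intro m hm; simp only [Finset.mem_Icc] at *; omega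
          · intro m hm hm'
            simp only [Finset.mem_Icc] at hm hm'
            have hma : j + 1 ≤ m.natAbs := by omega
            have hmax : max ((j:ℝ) + 1 - (m.natAbs:ℝ)) 0 = 0 := by
              rw [max_eq_right]
              have : ((j:ℝ) + 1) ≤ (m.natAbs:ℝ) := by exact_mod_cast hma
              linarith
            rw [hmax]
            simp
      _ = ((∑ j ∈ range L, c j * Complex.normSq (auxT x j) : ℝ) : ℂ) := by
          rw [Complex.ofReal_sum]
          refine Finset.sum_congr rfl fun j hj => ?_
          rw [Complex.mul_conj]
          push_cast
          ring
  rw [key]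
  constructor
  · exact Complex.ofReal_im _
  · rw [Complex.ofReal_re]
    apply Finset.sum_nonneg
    intro j hj
    exact mul_nonneg (hcnn j hj) (Complex.normSq_nonneg _)
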